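/- Let v and w be two vertices of a connected circle graph G = I(W), where W is a double occurrence word. Then v and w appear consecutively in W (i.e., some appearance of v and some appearance of w occupy cyclically adjacent positions of W) if and only if there is an orientation of W whose corresponding Naji solution β satisfies β(x,v) = β(x,w) for all vertices x ∉ {v,w}. -/

import Mathlib

/-- A double occurrence word on the letter set `V`: every letter appears exactly twice. -/
def IsDOW {V : Type*} [DecidableEq V] (W : List V) : Prop := ∀ v : V, W.count v = 2

/-- Two letters are interlaced in `W` if they occur in the order `v,w,v,w` or `w,v,w,v`. -/
def Interlaced {V : Type*} (W : List V) (v w : V) : Prop :=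
  [v, w, v, w].Sublist W ∨ [w, v, w, v].Sublist W

/-- The interlacement graph of a word: distinct letters are adjacent iff interlaced. -/
def interlacementGraph {V : Type*} (W : List V) : SimpleGraph V where
  Adj v w := v ≠ w ∧ Interlaced W v w
  symm := ⟨fun _ _ h => ⟨h.1.symm, Or.symm h.2⟩⟩
  loopless := ⟨fun _ h => h.1 rfl⟩

/-- `G` is a circle graph if it is the interlacement graph of a double occurrence word. -/
def IsCircleGraph {V : Type*} [DecidableEq V] (G : SimpleGraph V) : Prop :=
  ∃ W : List V, IsDOW W ∧ interlacementGraph W = G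

/-- An orientation of a double occurrence word: for each letter, one of its two
appearances is designated as initial (`pIn`) and the other as terminal (`pOut`). -/
structure WordOrientation {V : Type*} (W : List V) where
  pIn : V → Fin W.length
  pOut : V → Fin W.length
  ne : ∀ v, pIn v ≠ pOut v
  getIn : ∀ v, W.get (pIn v) = v
  getOut : ∀ v, W.get (pOut v) = v

/-- The Naji solution of `I(W)` corresponding to an orientation of `W`:
`β(v,w) = 0` iff, after cyclically permuting `W` to begin with `v^in`, the appearance
`w^out` precedes `v^out` (positions are compared by their cyclic offset from `v^in`). -/
def orientedBeta {V : Type*} (W : List V) (o : WordOrientation W) : V → V → ZMod 2 :=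
  fun v w =>
    if ((o.pOut w).val + W.length - (o.pIn v).val) % W.length <
        ((o.pOut v).val + W.length - (o.pIn v).val) % W.length then 0 else 1

/-! ### Arithmetic helpers -/

lemma my_modL {L x : ℕ} (hL : 0 < L) (h : x < 2*L) :
    x % L = if x < L then x else x - L := by
  split_ifs with h'
  · exact Nat.mod_eq_of_lt h'
  · rw [Nat.mod_eq_sub_mod (le_of_not_gt h'), Nat.mod_eq_of_lt (by omega)]

set_option maxHeartbeats 1600000 in
/-- cyclic rotation preserves cyclic order of four points -/
lemma my_cyc4 {L c i j k l : ℕ} (hc : c < L) (h1 : i < j) (h2 : j < k) (h3 : k < l)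
    (hl : l < L) :
    ((i+L-c)%L < (j+L-c)%L ∧ (j+L-c)%L < (k+L-c)%L ∧ (k+L-c)%L < (l+L-c)%L) ∨
    ((j+L-c)%L < (k+L-c)%L ∧ (k+L-c)%L < (l+L-c)%L ∧ (l+L-c)%L < (i+L-c)%L) ∨
    ((k+L-c)%L < (l+L-c)%L ∧ (l+L-c)%L < (i+L-c)%L ∧ (i+L-c)%L < (j+L-c)%L) ∨
    ((l+L-c)%L < (i+L-c)%L ∧ (i+L-c)%L < (j+L-c)%L ∧ (j+L-c)%L < (k+L-c)%L) := by
  have hL : 0 < L := by omega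
  rw [my_modL (x := i+L-c) hL (by omega), my_modL (x := j+L-c) hL (by omega),
    my_modL (x := k+L-c) hL (by omega), my_modL (x := l+L-c) hL (by omega)]
  split_ifs <;> omega

/-- change of basepoint -/
lemma my_shift {L p q c : ℕ} (hp : p < L) (hq : q < L) (hc : c < L) :
    ((p + L - c) % L + L - (q + L - c) % L) % L = (p + L - q) % L := by
  have hL : 0 < L := by omega
  rw [my_modL hL (show p + L - c < 2*L by omega),
      my_modL hL (show q + L - c < 2*L by omega)]
  split_ifs <;> rw [my_modL hL (by omega), my_modL hL (by omega)] <;> split_ifs <;> omega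

lemma my_rc_inj {L p q c : ℕ} (hp : p < L) (hq : q < L) (hc : c < L)
    (h : (p + L - c) % L = (q + L - c) % L) : p = q := by
  have hL : 0 < L := by omega
  rw [my_modL hL (by omega), my_modL hL (by omega)] at h
  split_ifs at h <;> omega

lemma my_rc_surj {L q c : ℕ} (hq : q < L) (hc : c < L) :
    ((q + c) % L + L - c) % L = q := by
  have hL : 0 < L := by omega
  rw [my_modL (x := q + c) hL (by omega)]
  split_ifs with h <;> rw [my_modL hL (by omega)] <;> split_ifs <;> omega

lemma my_dich_arith {L a b m : ℕ} (ha : a < L) (hb : b < L) (hm : m < L)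
    (ha0 : a ≠ 0) (hb0 : b ≠ 0) (ham : a ≠ m) (hbm : b ≠ m) (hab : a ≠ b) (hm0 : m ≠ 0)
    (h : ((0 + L - a) % L < (b + L - a) % L) ↔ ((m + L - a) % L < (b + L - a) % L)) :
    (a < m ∧ b < m) ∨ (m < a ∧ m < b) := by
  have hL : 0 < L := by omega
  rw [my_modL hL (by omega), my_modL hL (by omega), my_modL hL (by omega)] at h
  split_ifs at h <;> omega

lemma my_fwd_arith {L i j q b : ℕ} (hi : i < L) (hj : j < L) (hq : q < L) (hb : b < L)
    (hij : (i+1) % L = j) (_hiq : i ≠ q) (hjq : j ≠ q) (hbq : b ≠ q) (hbi : b ≠ i)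
    (hbj : b ≠ j) :
    ((i + L - q) % L < (b + L - q) % L ↔ (j + L - q) % L < (b + L - q) % L) := by
  have hL : 0 < L := by omega
  rw [my_modL hL (by omega)] at hij
  rw [my_modL hL (by omega), my_modL hL (by omega), my_modL hL (by omega)]
  split_ifs at hij ⊢ <;> omega

lemma my_last {L c d : ℕ} (hc : c < L) (hd : d < L) (h : (d + L - c) % L = L - 1) :
    (d + 1) % L = c := by
  have hL : 0 < L := by omega
  rw [my_modL hL (by omega)] at h
  rw [my_modL hL (by omega)]
  split_ifs at h ⊢ <;> omega

lemma my_ififf {P Q : Prop} [Decidable P] [Decidable Q]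
    (h : (if P then (0 : ZMod 2) else 1) = (if Q then 0 else 1)) : P ↔ Q := by
  split_ifs at h with h1 h2
  · exact iff_of_true h1 h2
  · exact absurd h (by decide)
  · exact absurd h (by decide)
  · exact iff_of_false h1 (by assumption)

/-! ### List helpers -/

lemma my_three {α : Type*} [DecidableEq α] {W : List α} {x : α} {i j k : Fin W.length}
    (hij : i < j) (hjk : j < k) (hi : W.get i = x) (hj : W.get j = x) (hk : W.get k = x) :
    3 ≤ W.count x := by
  have hs : List.Sublist [x, x, x] W := by
    rw [List.sublist_iff_exists_fin_orderEmbedding_get_eq]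
    refine ⟨OrderEmbedding.ofStrictMono (fun t => ![i, j, k] t) ?_, ?_⟩
    · intro a b hab
      fin_cases a <;> fin_cases b <;> simp_all <;> omega
    · intro t; fin_cases t <;> simp_all [List.get_eq_getElem]
  have h := hs.count_le x
  simpa using h

lemma my_two {α : Type*} [DecidableEq α] {W : List α} (hW : IsDOW W) (x : α) :
    ∃ p q : Fin W.length, p ≠ q ∧ W.get p = x ∧ W.get q = x := by
  have h2 : List.Sublist [x, x] W := List.duplicate_iff_sublist.mp
    (List.duplicate_iff_two_le_count.mpr (by rw [hW x]))
  rw [List.sublist_iff_exists_fin_orderEmbedding_get_eq] at h2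
  obtain ⟨f, hf⟩ := h2
  refine ⟨f ⟨0, by simp⟩, f ⟨1, by simp⟩, ?_, (hf _).symm, (hf _).symm⟩
  intro h
  have h3 := f.injective h
  rw [Fin.mk.injEq] at h3
  simp at h3

lemma my_occ {V : Type*} [DecidableEq V] {W : List V} (hW : IsDOW W) (o : WordOrientation W)
    (x : V) (i : Fin W.length) (hi : W.get i = x) : i = o.pIn x ∨ i = o.pOut x := by
  by_contra h
  push_neg at h
  obtain ⟨hne1, hne2⟩ := h
  have h1 := o.getIn x
  have h2 := o.getOut x
  have h3 := o.ne x
  have key : 3 ≤ W.count x := by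
    rcases hne1.lt_or_gt with h4 | h4 <;> rcases hne2.lt_or_gt with h5 | h5 <;>
      rcases h3.lt_or_gt with h6 | h6
    · exact my_three h4 h6 hi h1 h2
    · exact my_three h5 h6 hi h2 h1
    · exact absurd h6 (lt_asymm (h5.trans h4))
    · exact my_three h5 h4 h2 hi h1
    · exact my_three h4 h5 h1 hi h2
    · exact absurd h4 (lt_asymm (h5.trans h6))
    · exact my_three h6 h5 h1 h2 hi
    · exact my_three h6 h4 h2 h1 hi
  rw [hW x] at key
  omega

lemma my_altern {V : Type*} {W : List V} {x y : V} (h : [x, y, x, y].Sublist W) :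
    ∃ i j k l : Fin W.length, i < j ∧ j < k ∧ k < l ∧
      W.get i = x ∧ W.get j = y ∧ W.get k = x ∧ W.get l = y := by
  rw [List.sublist_iff_exists_fin_orderEmbedding_get_eq] at h
  obtain ⟨f, hf⟩ := h
  refine ⟨f ⟨0, by simp⟩, f ⟨1, by simp⟩, f ⟨2, by simp⟩, f ⟨3, by simp⟩,
    f.strictMono (Fin.mk_lt_mk.mpr (by norm_num)), f.strictMono (Fin.mk_lt_mk.mpr (by norm_num)),
    f.strictMono (Fin.mk_lt_mk.mpr (by norm_num)),
    (hf _).symm, (hf _).symm, (hf _).symm, (hf _).symm⟩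

/-! ### Cyclic offsets -/

/-- cyclic offset of position `p` from basepoint `c`. -/
def myRc {V : Type*} (W : List V) (c : ℕ) (p : Fin W.length) : ℕ :=
  (p.val + W.length - c) % W.length

lemma myRc_lt {V : Type*} (W : List V) (c : ℕ) (p : Fin W.length) (hL : 0 < W.length) :
    myRc W c p < W.length := Nat.mod_lt _ hL

lemma myRc_self {V : Type*} (W : List V) (p : Fin W.length) :
    myRc W p.val p = 0 := by
  have h1 : p.val + W.length - p.val = W.length := by omega
  rw [myRc, h1, Nat.mod_self]

lemma my_rcne {V : Type*} {W : List V} {c : ℕ} (hc : c < W.length) {p r : Fin W.length}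
    (h : p ≠ r) : myRc W c p ≠ myRc W c r :=
  fun hh => h (Fin.ext (my_rc_inj p.isLt r.isLt hc hh))

lemma my_getne {V : Type*} {W : List V} {p r : Fin W.length}
    (h : W.get p ≠ W.get r) : p ≠ r := fun hh => h (congrArg W.get hh)

/-- non-crossing of chords: if all appearances of `x` are outside the cyclic
interval `[s,t)` (w.r.t. basepoint `c`) and all appearances of `y` are inside it,
then `x` and `y` are not interlaced. -/
lemma my_nocross {V : Type*} {W : List V} {x y : V} {c s t : ℕ} (hc : c < W.length)
    (hx : ∀ i : Fin W.length, W.get i = x → (myRc W c i < s ∨ t ≤ myRc W c i))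
    (hy : ∀ i : Fin W.length, W.get i = y → (s ≤ myRc W c i ∧ myRc W c i < t)) :
    ¬ Interlaced W x y := by
  intro h
  rcases h with h | h <;> obtain ⟨i, j, k, l, h1, h2, h3, g1, g2, g3, g4⟩ := my_altern h
  · have hcyc := my_cyc4 hc (Fin.lt_iff_val_lt_val.mp h1) (Fin.lt_iff_val_lt_val.mp h2)
      (Fin.lt_iff_val_lt_val.mp h3) l.isLt
    have a1 := hx i g1; have a2 := hy j g2; have a3 := hx k g3; have a4 := hy l g4
    simp only [myRc] at a1 a2 a3 a4
    omega
  · have hcyc := my_cyc4 hc (Fin.lt_iff_val_lt_val.mp h1) (Fin.lt_iff_val_lt_val.mp h2)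
      (Fin.lt_iff_val_lt_val.mp h3) l.isLt
    have a1 := hy i g1; have a2 := hx j g2; have a3 := hy k g3; have a4 := hx l g4
    simp only [myRc] at a1 a2 a3 a4
    omega

lemma my_cut {V : Type*} {W : List V}
    (hconn : (interlacementGraph W).Connected) (S : Set V) {z z' : V}
    (hz : z ∈ S) (hz' : z' ∉ S)
    (h : ∀ a b : V, a ∈ S → b ∉ S → ¬ Interlaced W a b) : False := by
  obtain ⟨p⟩ := hconn.preconnected z z'
  obtain ⟨d, _, h1, h2⟩ := p.exists_boundary_dart S hz hz'
  exact h _ _ h1 h2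
    (show d.toProd.1 ≠ d.toProd.2 ∧ Interlaced W d.toProd.1 d.toProd.2 from d.adj).2

/-! ### The dichotomy given the Naji-solution hypothesis -/

lemma my_dich {V : Type*} [DecidableEq V] {W : List V} (hW : IsDOW W) (o : WordOrientation W)
    {v w : V} (hvw : v ≠ w)
    (hβ : ∀ x : V, x ≠ v → x ≠ w → orientedBeta W o x v = orientedBeta W o x w)
    (x : V) (hxv : x ≠ v) (hxw : x ≠ w) :
    (myRc W (o.pOut v).val (o.pIn x) < myRc W (o.pOut v).val (o.pOut w) ∧
     myRc W (o.pOut v).val (o.pOut x) < myRc W (o.pOut v).val (o.pOut w)) ∨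
    (myRc W (o.pOut v).val (o.pOut w) < myRc W (o.pOut v).val (o.pIn x) ∧
     myRc W (o.pOut v).val (o.pOut w) < myRc W (o.pOut v).val (o.pOut x)) := by
  have hL : 0 < W.length := (o.pOut v).pos
  have hc : (o.pOut v).val < W.length := (o.pOut v).isLt
  have h := hβ x hxv hxw
  unfold orientedBeta at h
  have hiff := my_ififf h
  have hz : myRc W (o.pOut v).val (o.pOut v) = 0 := myRc_self W (o.pOut v)
  -- bridge: express the offsets from x^in in terms of offsets from v^out
  have e0 : (0 + W.length - myRc W (o.pOut v).val (o.pIn x)) % W.length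
      = ((o.pOut v).val + W.length - (o.pIn x).val) % W.length := by
    have h1 := my_shift (p := (o.pOut v).val) (q := (o.pIn x).val) (c := (o.pOut v).val)
      (o.pOut v).isLt (o.pIn x).isLt hc
    rw [show ((o.pOut v).val + W.length - (o.pOut v).val) % W.length = 0 from hz] at h1
    exact h1
  have eb : (myRc W (o.pOut v).val (o.pOut x) + W.length - myRc W (o.pOut v).val (o.pIn x))
      % W.length = ((o.pOut x).val + W.length - (o.pIn x).val) % W.length :=
    my_shift (o.pOut x).isLt (o.pIn x).isLt hc
  have em : (myRc W (o.pOut v).val (o.pOut w) + W.length - myRc W (o.pOut v).val (o.pIn x))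
      % W.length = ((o.pOut w).val + W.length - (o.pIn x).val) % W.length :=
    my_shift (o.pOut w).isLt (o.pIn x).isLt hc
  rw [← e0, ← eb, ← em] at hiff
  -- side conditions
  have ha : myRc W (o.pOut v).val (o.pIn x) < W.length := myRc_lt W _ _ hL
  have hb : myRc W (o.pOut v).val (o.pOut x) < W.length := myRc_lt W _ _ hL
  have hm : myRc W (o.pOut v).val (o.pOut w) < W.length := myRc_lt W _ _ hL
  have ha0 : myRc W (o.pOut v).val (o.pIn x) ≠ 0 := by
    rw [← hz]; exact my_rcne hc (my_getne (by rw [o.getIn x, o.getOut v]; exact hxv))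
  have hb0 : myRc W (o.pOut v).val (o.pOut x) ≠ 0 := by
    rw [← hz]; exact my_rcne hc (my_getne (by rw [o.getOut x, o.getOut v]; exact hxv))
  have ham : myRc W (o.pOut v).val (o.pIn x) ≠ myRc W (o.pOut v).val (o.pOut w) :=
    my_rcne hc (my_getne (by rw [o.getIn x, o.getOut w]; exact hxw))
  have hbm : myRc W (o.pOut v).val (o.pOut x) ≠ myRc W (o.pOut v).val (o.pOut w) :=
    my_rcne hc (my_getne (by rw [o.getOut x, o.getOut w]; exact hxw))
  have hab : myRc W (o.pOut v).val (o.pIn x) ≠ myRc W (o.pOut v).val (o.pOut x) :=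
    my_rcne hc (o.ne x)
  have hm0 : myRc W (o.pOut v).val (o.pOut w) ≠ 0 := by
    rw [← hz]; exact my_rcne hc (my_getne (by rw [o.getOut w, o.getOut v]; exact hvw.symm))
  exact my_dich_arith ha hb hm ha0 hb0 ham hbm hab hm0 hiff

/-! ### Key lemma: if both `v^in` and `w^in` lie on the arc from `v^out` to `w^out`,
then `w^out` is immediately followed by `v^out`. -/

lemma my_key {V : Type*} [Fintype V] [DecidableEq V] (W : List V) (hW : IsDOW W)
    (hconn : (interlacementGraph W).Connected) (v w : V) (hvw : v ≠ w)
    (o : WordOrientation W)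
    (hβ : ∀ x : V, x ≠ v → x ≠ w → orientedBeta W o x v = orientedBeta W o x w)
    (he : myRc W (o.pOut v).val (o.pIn v) < myRc W (o.pOut v).val (o.pOut w))
    (hf : myRc W (o.pOut v).val (o.pIn w) < myRc W (o.pOut v).val (o.pOut w)) :
    ((o.pOut w).val + 1) % W.length = (o.pOut v).val := by
  have hL : 0 < W.length := (o.pOut v).pos
  have hc : (o.pOut v).val < W.length := (o.pOut v).isLt
  have hz : myRc W (o.pOut v).val (o.pOut v) = 0 := myRc_self W (o.pOut v)
  have hm : myRc W (o.pOut v).val (o.pOut w) < W.length := myRc_lt W _ _ hL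
  have hm0 : myRc W (o.pOut v).val (o.pOut w) ≠ 0 := by
    rw [← hz]; exact my_rcne hc (my_getne (by rw [o.getOut w, o.getOut v]; exact hvw.symm))
  have hm1 : myRc W (o.pOut v).val (o.pOut w) = W.length - 1 := by
    by_contra hne
    have hmlt : myRc W (o.pOut v).val (o.pOut w) + 1 < W.length := by omega
    -- a position on the complementary arc
    have hplt : (myRc W (o.pOut v).val (o.pOut w) + 1 + (o.pOut v).val) % W.length
        < W.length := Nat.mod_lt _ hL
    have hp : myRc W (o.pOut v).val ⟨_, hplt⟩
        = myRc W (o.pOut v).val (o.pOut w) + 1 := my_rc_surj hmlt hc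
    have hyv : W.get ⟨_, hplt⟩ ≠ v := by
      intro h
      rcases my_occ hW o v ⟨_, hplt⟩ h with h1 | h1 <;> rw [h1] at hp
      · omega
      · rw [hz] at hp; omega
    have hyw : W.get ⟨_, hplt⟩ ≠ w := by
      intro h
      rcases my_occ hW o w ⟨_, hplt⟩ h with h1 | h1 <;> rw [h1] at hp
      · omega
      · omega
    -- the separating set
    have hvS : v ∈ {z : V | ∀ iq : Fin W.length, W.get iq = z →
        (myRc W (o.pOut v).val iq < myRc W (o.pOut v).val (o.pOut w) + 1 ∨
          W.length ≤ myRc W (o.pOut v).val iq)} := by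
      intro iq hiq
      rcases my_occ hW o v iq hiq with h2 | h2 <;> rw [h2]
      · left; omega
      · left; rw [hz]; omega
    have hwS : w ∈ {z : V | ∀ iq : Fin W.length, W.get iq = z →
        (myRc W (o.pOut v).val iq < myRc W (o.pOut v).val (o.pOut w) + 1 ∨
          W.length ≤ myRc W (o.pOut v).val iq)} := by
      intro iq hiq
      rcases my_occ hW o w iq hiq with h2 | h2 <;> rw [h2]
      · left; omega
      · left; omega
    have hyS : W.get ⟨_, hplt⟩ ∉ {z : V | ∀ iq : Fin W.length, W.get iq = z →
        (myRc W (o.pOut v).val iq < myRc W (o.pOut v).val (o.pOut w) + 1 ∨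
          W.length ≤ myRc W (o.pOut v).val iq)} := by
      intro hS
      rcases hS ⟨_, hplt⟩ rfl with h2 | h2 <;> omega
    refine my_cut hconn _ hvS hyS ?_
    intro A B hA hB
    have hBv : B ≠ v := fun h => hB (h ▸ hvS)
    have hBw : B ≠ w := fun h => hB (h ▸ hwS)
    have hBin : ∀ iq : Fin W.length, W.get iq = B →
        myRc W (o.pOut v).val (o.pOut w) + 1 ≤ myRc W (o.pOut v).val iq ∧
          myRc W (o.pOut v).val iq < W.length := by
      rcases my_dich hW o hvw hβ B hBv hBw with ⟨hs1, hs2⟩ | ⟨hs1, hs2⟩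
      · exfalso
        apply hB
        intro iq hiq
        rcases my_occ hW o B iq hiq with h2 | h2 <;> rw [h2] <;> left <;> omega
      · intro iq hiq
        have hlt : myRc W (o.pOut v).val iq < W.length := myRc_lt W _ _ hL
        rcases my_occ hW o B iq hiq with h2 | h2 <;> rw [h2] at hlt ⊢ <;>
          exact ⟨by omega, hlt⟩
    exact my_nocross hc hA hBin
  exact my_last hc (o.pOut w).isLt hm1

/-! ### Forward direction: consecutive appearances give a suitable orientation -/

lemma my_forward {V : Type*} [DecidableEq V] (W : List V) (hW : IsDOW W) {v w : V}
    (hvw : v ≠ w) {i j : Fin W.length} (hgi : W.get i = v) (hgj : W.get j = w)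
    (hadj : (i.val + 1) % W.length = j.val) :
    ∃ o : WordOrientation W, ∀ x : V, x ≠ v → x ≠ w →
      orientedBeta W o x v = orientedBeta W o x w := by
  classical
  have pick : ∀ x : V, ∃ pq : Fin W.length × Fin W.length,
      pq.1 ≠ pq.2 ∧ W.get pq.1 = x ∧ W.get pq.2 = x := by
    intro x
    obtain ⟨p, q, h1, h2, h3⟩ := my_two hW x
    exact ⟨(p, q), h1, h2, h3⟩
  refine ⟨⟨fun x => if (if x = v then i else if x = w then j else (pick x).choose.1)
        = (pick x).choose.1 then (pick x).choose.2 else (pick x).choose.1,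
      fun x => if x = v then i else if x = w then j else (pick x).choose.1,
      ?_, ?_, ?_⟩, ?_⟩
  · -- pIn ≠ pOut
    intro x
    by_cases h1 : x = v
    · simp only [if_pos h1]
      by_cases h : i = (pick x).choose.1
      · rw [if_pos h, h]; exact (pick x).choose_spec.1.symm
      · rw [if_neg h]; exact fun hh => h hh.symm
    · simp only [if_neg h1]
      by_cases h2 : x = w
      · simp only [if_pos h2]
        by_cases h : j = (pick x).choose.1
        · rw [if_pos h, h]; exact (pick x).choose_spec.1.symm
        · rw [if_neg h]; exact fun hh => h hh.symm
      · simp only [if_neg h2, if_true]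
        exact (pick x).choose_spec.1.symm
  · -- get pIn
    intro x
    split_ifs <;>
      first
        | exact (pick x).choose_spec.2.2
        | exact (pick x).choose_spec.2.1
        | (rename_i h; exact h ▸ hgi)
        | (rename_i h; exact h ▸ hgj)
  · -- get pOut
    intro x
    by_cases h1 : x = v
    · rw [if_pos h1, hgi, h1]
    · by_cases h2 : x = w
      · rw [if_neg h1, if_pos h2, hgj, h2]
      · rw [if_neg h1, if_neg h2]; exact (pick x).choose_spec.2.1
  · -- the Naji condition
    intro x hxv hxw
    have hvalne : ∀ (p r : Fin W.length), W.get p ≠ W.get r → p.val ≠ r.val :=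
      fun p r h hh => h (congrArg W.get (Fin.ext hh))
    have hx1 := (pick x).choose_spec.2.1
    have hx2 := (pick x).choose_spec.2.2
    have f1 : i.val ≠ ((pick x).choose.2).val :=
      hvalne _ _ (by rw [hgi, hx2]; exact fun h => hxv h.symm)
    have f2 : j.val ≠ ((pick x).choose.2).val :=
      hvalne _ _ (by rw [hgj, hx2]; exact fun h => hxw h.symm)
    have f3 : ((pick x).choose.1).val ≠ ((pick x).choose.2).val :=
      fun hh => (pick x).choose_spec.1 (Fin.ext hh)
    have f4 : ((pick x).choose.1).val ≠ i.val :=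
      hvalne _ _ (by rw [hgi, hx1]; exact hxv)
    have f5 : ((pick x).choose.1).val ≠ j.val :=
      hvalne _ _ (by rw [hgj, hx1]; exact hxw)
    simp only [orientedBeta]
    simp only [if_pos rfl, if_neg hxv, if_neg hxw,
      if_neg (show ¬ w = v from fun h => hvw h.symm)]
    exact if_congr
      (my_fwd_arith i.isLt j.isLt ((pick x).choose.2).isLt ((pick x).choose.1).isLt
        hadj f1 f2 f3 f4 f5) rfl rfl

/-- Two vertices `v ≠ w` of a connected circle graph `G = I(W)` appear consecutively
(cyclically) in `W` iff some orientation of `W` has corresponding Naji solution `β`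
with `β(x,v) = β(x,w)` for all `x ∉ {v,w}`. -/
theorem consecutive_iff_orientation {V : Type*} [Fintype V] [DecidableEq V]
    (W : List V) (hW : IsDOW W) (hconn : (interlacementGraph W).Connected)
    (v w : V) (hvw : v ≠ w) :
    (∃ i j : Fin W.length, W.get i = v ∧ W.get j = w ∧
      ((i.val + 1) % W.length = j.val ∨ (j.val + 1) % W.length = i.val)) ↔
    (∃ o : WordOrientation W, ∀ x : V, x ≠ v → x ≠ w →
      orientedBeta W o x v = orientedBeta W o x w) := by
  constructor
  · rintro ⟨i, j, hgi, hgj, hij | hij⟩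
    · exact my_forward W hW hvw hgi hgj hij
    · obtain ⟨o, ho⟩ := my_forward W hW hvw.symm hgj hgi hij
      exact ⟨o, fun x h1 h2 => (ho x h2 h1).symm⟩
  · rintro ⟨o, hβ⟩
    have hL : 0 < W.length := (o.pOut v).pos
    have hc : (o.pOut v).val < W.length := (o.pOut v).isLt
    have hz : myRc W (o.pOut v).val (o.pOut v) = 0 := myRc_self W (o.pOut v)
    have hm : myRc W (o.pOut v).val (o.pOut w) < W.length := myRc_lt W _ _ hL
    have hm0 : myRc W (o.pOut v).val (o.pOut w) ≠ 0 := by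
      rw [← hz]
      exact my_rcne hc (my_getne (by rw [o.getOut w, o.getOut v]; exact hvw.symm))
    have heL : myRc W (o.pOut v).val (o.pIn v) < W.length := myRc_lt W _ _ hL
    have hfL : myRc W (o.pOut v).val (o.pIn w) < W.length := myRc_lt W _ _ hL
    have he0 : myRc W (o.pOut v).val (o.pIn v) ≠ 0 := by
      rw [← hz]; exact my_rcne hc (o.ne v)
    have hf0 : myRc W (o.pOut v).val (o.pIn w) ≠ 0 := by
      rw [← hz]
      exact my_rcne hc (my_getne (by rw [o.getIn w, o.getOut v]; exact hvw.symm))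
    have hem : myRc W (o.pOut v).val (o.pIn v) ≠ myRc W (o.pOut v).val (o.pOut w) :=
      my_rcne hc (my_getne (by rw [o.getIn v, o.getOut w]; exact hvw))
    have hfm : myRc W (o.pOut v).val (o.pIn w) ≠ myRc W (o.pOut v).val (o.pOut w) :=
      my_rcne hc (o.ne w)
    by_cases he : myRc W (o.pOut v).val (o.pIn v) < myRc W (o.pOut v).val (o.pOut w)
    · by_cases hf : myRc W (o.pOut v).val (o.pIn w) < myRc W (o.pOut v).val (o.pOut w)
      · exact ⟨o.pOut v, o.pOut w, o.getOut v, o.getOut w,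
          Or.inr (my_key W hW hconn v w hvw o hβ he hf)⟩
      · -- mixed case 1 : v^in on the small arc, w^in on the large arc
        exfalso
        have hvS : v ∈ {z : V | ∀ iq : Fin W.length, W.get iq = z →
            (myRc W (o.pOut v).val iq < myRc W (o.pOut v).val (o.pOut w) ∨
              W.length ≤ myRc W (o.pOut v).val iq)} := by
          intro iq hiq
          rcases my_occ hW o v iq hiq with h2 | h2 <;> rw [h2]
          · left; omega
          · left; rw [hz]; omega
        have hwS : w ∉ {z : V | ∀ iq : Fin W.length, W.get iq = z →
            (myRc W (o.pOut v).val iq < myRc W (o.pOut v).val (o.pOut w) ∨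
              W.length ≤ myRc W (o.pOut v).val iq)} := by
          intro hS
          rcases hS (o.pOut w) (o.getOut w) with h2 | h2 <;> omega
        refine my_cut hconn _ hvS hwS ?_
        intro A B hA hB
        have hBin : ∀ iq : Fin W.length, W.get iq = B →
            myRc W (o.pOut v).val (o.pOut w) ≤ myRc W (o.pOut v).val iq ∧
              myRc W (o.pOut v).val iq < W.length := by
          by_cases hBw : B = w
          · subst hBw
            intro iq hiq
            rcases my_occ hW o B iq hiq with h2 | h2 <;> rw [h2]
            · exact ⟨by omega, hfL⟩
            · exact ⟨by omega, hm⟩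
          · have hBv : B ≠ v := fun h => hB (h ▸ hvS)
            rcases my_dich hW o hvw hβ B hBv hBw with ⟨hs1, hs2⟩ | ⟨hs1, hs2⟩
            · exfalso
              apply hB
              intro iq hiq
              rcases my_occ hW o B iq hiq with h2 | h2 <;> rw [h2] <;> left <;> omega
            · intro iq hiq
              have hlt : myRc W (o.pOut v).val iq < W.length := myRc_lt W _ _ hL
              rcases my_occ hW o B iq hiq with h2 | h2 <;> rw [h2] at hlt ⊢ <;>
                exact ⟨by omega, hlt⟩
        exact my_nocross hc hA hBin
    · by_cases hf : myRc W (o.pOut v).val (o.pIn w) < myRc W (o.pOut v).val (o.pOut w)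
      · -- mixed case 2 : v^in on the large arc, w^in on the small arc
        exfalso
        have hvS : v ∈ {z : V | ∀ iq : Fin W.length, W.get iq = z →
            (myRc W (o.pOut v).val iq < 1 ∨
              myRc W (o.pOut v).val (o.pOut w) + 1 ≤ myRc W (o.pOut v).val iq)} := by
          intro iq hiq
          rcases my_occ hW o v iq hiq with h2 | h2 <;> rw [h2]
          · right; omega
          · left; rw [hz]; omega
        have hwS : w ∉ {z : V | ∀ iq : Fin W.length, W.get iq = z →
            (myRc W (o.pOut v).val iq < 1 ∨
              myRc W (o.pOut v).val (o.pOut w) + 1 ≤ myRc W (o.pOut v).val iq)} := by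
          intro hS
          rcases hS (o.pOut w) (o.getOut w) with h2 | h2 <;> omega
        refine my_cut hconn _ hvS hwS ?_
        intro A B hA hB
        have hBin : ∀ iq : Fin W.length, W.get iq = B →
            1 ≤ myRc W (o.pOut v).val iq ∧
              myRc W (o.pOut v).val iq < myRc W (o.pOut v).val (o.pOut w) + 1 := by
          by_cases hBw : B = w
          · subst hBw
            intro iq hiq
            rcases my_occ hW o B iq hiq with h2 | h2 <;> rw [h2]
            · exact ⟨by omega, by omega⟩
            · exact ⟨by omega, by omega⟩
          · have hBv : B ≠ v := fun h => hB (h ▸ hvS)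
            have hB1 : myRc W (o.pOut v).val (o.pIn B) ≠ 0 := by
              rw [← hz]
              exact my_rcne hc (my_getne (by rw [o.getIn B, o.getOut v]; exact hBv))
            have hB2 : myRc W (o.pOut v).val (o.pOut B) ≠ 0 := by
              rw [← hz]
              exact my_rcne hc (my_getne (by rw [o.getOut B, o.getOut v]; exact hBv))
            rcases my_dich hW o hvw hβ B hBv hBw with ⟨hs1, hs2⟩ | ⟨hs1, hs2⟩
            · intro iq hiq
              rcases my_occ hW o B iq hiq with h2 | h2 <;> rw [h2] <;>
                exact ⟨by omega, by omega⟩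
            · exfalso
              apply hB
              intro iq hiq
              rcases my_occ hW o B iq hiq with h2 | h2 <;> rw [h2] <;> right <;> omega
        exact my_nocross hc hA hBin
      · -- both on the large arc : apply the key lemma with `v` and `w` exchanged
        have shift : ∀ p : Fin W.length, myRc W (o.pOut w).val p =
            (myRc W (o.pOut v).val p + W.length -
              myRc W (o.pOut v).val (o.pOut w)) % W.length :=
          fun p => (my_shift p.isLt (o.pOut w).isLt hc).symm
        have he' : myRc W (o.pOut w).val (o.pIn w) < myRc W (o.pOut w).val (o.pOut v) := by
          rw [shift (o.pIn w), shift (o.pOut v), hz]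
          rw [my_modL hL (by omega), my_modL hL (by omega)]
          split_ifs <;> omega
        have hf' : myRc W (o.pOut w).val (o.pIn v) < myRc W (o.pOut w).val (o.pOut v) := by
          rw [shift (o.pIn v), shift (o.pOut v), hz]
          rw [my_modL hL (by omega), my_modL hL (by omega)]
          split_ifs <;> omega
        exact ⟨o.pOut v, o.pOut w, o.getOut v, o.getOut w,
          Or.inl (my_key W hW hconn w v hvw.symm o
            (fun x h1 h2 => (hβ x h2 h1).symm) he' hf')⟩
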